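/- Let 0 < p < 2 and let a, b be positive semidefinite n×n complex matrices with a invertible and b² ≤ a² (in the Loewner order). Then tr(a^{p-2}(a² − b²)) ≤ (2/p)·tr(a^p − b^p). -/

import Mathlib

open Matrix

private lemma trace_triple {n : ℕ} (d e : Fin n → ℂ) (M : Matrix (Fin n) (Fin n) ℂ) :
    (diagonal d * (M * (diagonal e * star M))).trace
      = ∑ i, ∑ j, d i * e j * (Complex.normSq (M i j) : ℂ) := by
  rw [Matrix.trace]
  refine Finset.sum_congr rfl fun i _ => ?_
  rw [Matrix.diag_apply, Matrix.diagonal_mul, Matrix.mul_apply, Finset.mul_sum]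
  refine Finset.sum_congr rfl fun j _ => ?_
  rw [Matrix.diagonal_mul, Matrix.star_apply,
    show (M i j * (e j * star (M i j))) = e j * (M i j * star (M i j)) by ring,
    Complex.star_def, Complex.mul_conj]
  ring

private lemma conj_mul_conj {n : ℕ} (U : Matrix (Fin n) (Fin n) ℂ) (hU : star U * U = 1)
    (X Y : Matrix (Fin n) (Fin n) ℂ) :
    (U * X * star U) * (U * Y * star U) = U * (X * Y) * star U := by
  calc (U * X * star U) * (U * Y * star U)
      = U * (X * ((star U * U) * (Y * star U))) := by simp only [mul_assoc]
    _ = U * (X * Y) * star U := by rw [hU, one_mul]; simp only [mul_assoc]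

private lemma cfc_mul_cfc_self {n : ℕ} {A : Matrix (Fin n) (Fin n) ℂ} (hA : A.IsHermitian)
    (g h : ℝ → ℝ) : hA.cfc g * hA.cfc h = hA.cfc fun t => g t * h t := by
  unfold Matrix.IsHermitian.cfc
  simp only [Unitary.conjStarAlgAut_apply]
  rw [conj_mul_conj _ (mem_unitaryGroup_iff'.mp hA.eigenvectorUnitary.2),
    diagonal_mul_diagonal]
  congr 2
  ext i j
  simp only [Matrix.diagonal_apply, Function.comp_apply, RCLike.ofReal_mul]

private lemma hermCfcConstOne {n : ℕ} {A : Matrix (Fin n) (Fin n) ℂ} (hA : A.IsHermitian) :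
    (hA.cfc fun _ => 1) = 1 := by
  unfold Matrix.IsHermitian.cfc
  simp only [Unitary.conjStarAlgAut_apply]
  have : diagonal (RCLike.ofReal ∘ (fun _ : ℝ => (1:ℝ)) ∘ hA.eigenvalues) =
      (1 : Matrix (Fin n) (Fin n) ℂ) := by
    ext i j
    simp [Matrix.diagonal_apply, Matrix.one_apply, Function.comp]
  rw [this, mul_one, mem_unitaryGroup_iff.mp hA.eigenvectorUnitary.2]

private lemma trace_cfc_mul_cfc {n : ℕ} {A B : Matrix (Fin n) (Fin n) ℂ}
    (hA : A.IsHermitian) (hB : B.IsHermitian) (g h : ℝ → ℝ) :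
    (hA.cfc g * hB.cfc h).trace
      = ((∑ i, ∑ j, g (hA.eigenvalues i) * h (hB.eigenvalues j) *
          Complex.normSq ((star (hA.eigenvectorUnitary : Matrix (Fin n) (Fin n) ℂ) *
            (hB.eigenvectorUnitary : Matrix (Fin n) (Fin n) ℂ)) i j) : ℝ) : ℂ) := by
  unfold Matrix.IsHermitian.cfc
  simp only [Unitary.conjStarAlgAut_apply]
  set U : Matrix (Fin n) (Fin n) ℂ := ↑hA.eigenvectorUnitary with hU
  set V : Matrix (Fin n) (Fin n) ℂ := ↑hB.eigenvectorUnitary with hV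
  set M : Matrix (Fin n) (Fin n) ℂ := star U * V with hM
  have hsM : star V * U = star M := by rw [hM, Matrix.star_mul, star_star]
  have h2 : U * diagonal (RCLike.ofReal ∘ g ∘ hA.eigenvalues) * star U *
        (V * diagonal (RCLike.ofReal ∘ h ∘ hB.eigenvalues) * star V)
      = U * (diagonal (RCLike.ofReal ∘ g ∘ hA.eigenvalues) *
          (star U * (V * (diagonal (RCLike.ofReal ∘ h ∘ hB.eigenvalues) * star V)))) := by
    simp only [mul_assoc]
  rw [h2, Matrix.trace_mul_comm]
  have h3 : diagonal (RCLike.ofReal ∘ g ∘ hA.eigenvalues) *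
        (star U * (V * (diagonal (RCLike.ofReal ∘ h ∘ hB.eigenvalues) * star V))) * U
      = diagonal (RCLike.ofReal ∘ g ∘ hA.eigenvalues) *
          (M * (diagonal (RCLike.ofReal ∘ h ∘ hB.eigenvalues) * star M)) := by
    rw [← hsM, hM]
    simp only [mul_assoc]
  rw [h3, trace_triple]
  push_cast
  rfl

private lemma scalar_key {p s t : ℝ} (hp0 : 0 < p) (hp2 : p < 2) (hs : 0 < s) (ht : 0 ≤ t) :
    s ^ (p - 2) * (s ^ 2 - t ^ 2) ≤ 2 / p * (s ^ p - t ^ p) := by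
  have hq1 : (0:ℝ) ≤ p / 2 := by positivity
  have hq2 : (0:ℝ) ≤ 1 - p / 2 := by linarith
  have hx : (0:ℝ) ≤ (t / s) ^ 2 := sq_nonneg _
  have key := Real.geom_mean_le_arith_mean2_weighted hq1 hq2 hx zero_le_one (by ring)
  rw [Real.one_rpow, mul_one, mul_one] at key
  have lhs_eq : (((t / s) ^ 2 : ℝ)) ^ (p / 2) = t ^ p / s ^ p := by
    rw [← Real.rpow_natCast (t / s) 2, ← Real.rpow_mul (div_nonneg ht hs.le),
      show ((2 : ℕ) : ℝ) * (p / 2) = p by push_cast; ring, Real.div_rpow ht hs.le]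
  rw [lhs_eq] at key
  have hsp : (0:ℝ) < s ^ p := Real.rpow_pos_of_pos hs p
  have hE : s ^ (p - 2) * s ^ 2 = s ^ p := by
    rw [← Real.rpow_natCast s 2, ← Real.rpow_add hs]; norm_num
  have hkey : t ^ p ≤ (p / 2 * (t / s) ^ 2 + (1 - p / 2)) * s ^ p := (div_le_iff₀ hsp).mp key
  have h5 : p / 2 * (t / s) ^ 2 * s ^ p = p / 2 * t ^ 2 * s ^ (p - 2) := by
    rw [div_pow, ← hE]; field_simp
  have hkey' : t ^ p ≤ p / 2 * t ^ 2 * s ^ (p - 2) + (1 - p / 2) * s ^ p := by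
    calc t ^ p ≤ (p / 2 * (t / s) ^ 2 + (1 - p / 2)) * s ^ p := hkey
    _ = p / 2 * t ^ 2 * s ^ (p - 2) + (1 - p / 2) * s ^ p := by rw [add_mul, h5]
  rw [div_mul_eq_mul_div, le_div_iff₀ hp0]
  nlinarith [hkey', hE]

open scoped ComplexOrder

/-- For `0 < p < 2` and positive semidefinite matrices `a, b` with `a` invertible
and `b² ≤ a²` (Loewner order), `tr(a^{p-2}(a² − b²)) ≤ (2/p)·tr(a^p − b^p)`,
where real powers are defined via the functional calculus. -/
theorem trace_pow_sub_le {n : ℕ} {p : ℝ} (hp0 : 0 < p) (hp2 : p < 2)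
    {A B : Matrix (Fin n) (Fin n) ℂ} (hA : A.PosSemidef) (hB : B.PosSemidef)
    (hAinv : IsUnit A) (hBA : (A ^ 2 - B ^ 2).PosSemidef) :
    ((hA.1.cfc fun t => t ^ (p - 2)) * (A ^ 2 - B ^ 2)).trace.re ≤
      (2 / p) * ((hA.1.cfc fun t => t ^ p) - (hB.1.cfc fun t => t ^ p)).trace.re := by
  classical
  have hlam : ∀ i, 0 < hA.1.eigenvalues i := by
    intro i
    rcases lt_or_eq_of_le (hA.eigenvalues_nonneg i) with h | h
    · exact h
    · exfalso
      have hdet : A.det ≠ 0 := ((Matrix.isUnit_iff_isUnit_det A).mp hAinv).ne_zero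
      rw [hA.1.det_eq_prod_eigenvalues] at hdet
      exact hdet (Finset.prod_eq_zero (Finset.mem_univ i) (by rw [← h]; norm_num))
  have hmu : ∀ j, 0 ≤ hB.1.eigenvalues j := hB.eigenvalues_nonneg
  have hW : ∀ i j, 0 ≤ Complex.normSq
      ((star (hA.1.eigenvectorUnitary : Matrix (Fin n) (Fin n) ℂ) *
        (hB.1.eigenvectorUnitary : Matrix (Fin n) (Fin n) ℂ)) i j) :=
    fun i j => Complex.normSq_nonneg _
  have hsqA : A ^ 2 = hA.1.cfc fun t => t ^ 2 := by
    rw [← Matrix.IsHermitian.cfc_eq]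
    exact (cfc_pow_id (R := ℝ) A 2 hA.1).symm
  have hsqB : B ^ 2 = hB.1.cfc fun t => t ^ 2 := by
    rw [← Matrix.IsHermitian.cfc_eq]
    exact (cfc_pow_id (R := ℝ) B 2 hB.1).symm
  rw [mul_sub, Matrix.trace_sub, Matrix.trace_sub, hsqA, hsqB,
    cfc_mul_cfc_self hA.1,
    show (hA.1.cfc fun t => t ^ (p - 2) * t ^ 2).trace
        = ((hA.1.cfc fun t => t ^ (p - 2) * t ^ 2) * hB.1.cfc fun _ => 1).trace by
      rw [hermCfcConstOne hB.1, mul_one],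
    show (hA.1.cfc fun t => t ^ p).trace
        = ((hA.1.cfc fun t => t ^ p) * hB.1.cfc fun _ => 1).trace by
      rw [hermCfcConstOne hB.1, mul_one],
    show (hB.1.cfc fun t => t ^ p).trace
        = ((hA.1.cfc fun _ => 1) * hB.1.cfc fun t => t ^ p).trace by
      rw [hermCfcConstOne hA.1, one_mul],
    trace_cfc_mul_cfc, trace_cfc_mul_cfc, trace_cfc_mul_cfc, trace_cfc_mul_cfc]
  simp only [Complex.sub_re, Complex.ofReal_re]
  rw [← Finset.sum_sub_distrib, ← Finset.sum_sub_distrib, Finset.mul_sum]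
  refine Finset.sum_le_sum fun i _ => ?_
  rw [← Finset.sum_sub_distrib, ← Finset.sum_sub_distrib, Finset.mul_sum]
  refine Finset.sum_le_sum fun j _ => ?_
  have h1 := scalar_key hp0 hp2 (hlam i) (hmu j)
  have h2 := mul_le_mul_of_nonneg_right h1 (hW i j)
  linarith [h2]
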